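/- For 0 ≤ k ≤ ⌊n/2⌋, the incomplete q-Chebyshev polynomials of the first kind satisfy the non-homogeneous recurrence T_{n+2}^k = (1+q^{n+1}) x T_{n+1}^k + q^{n+1} s T_n^k − q^{n+1+k²} ([n]_q/[n-k]_q) [n-k choose k]_q · ((-q;q)_{n-k-1}/(-q;q)_k) · s^{k+1} x^{n-2k}. -/

import Mathlib

/-- q-integer [n]_q = (1-q^n)/(1-q). -/
noncomputable def qint (q : ℂ) (n : ℕ) : ℂ := (1 - q ^ n) / (1 - q)

/-- q-factorial [n]_q!. -/
noncomputable def qfact (q : ℂ) (n : ℕ) : ℂ := ∏ i ∈ Finset.range n, qint q (i + 1)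

/-- Gaussian (q-binomial) coefficient, 0 for k > n. -/
noncomputable def qbinom (q : ℂ) (n k : ℕ) : ℂ :=
  if k ≤ n then qfact q n / (qfact q (n - k) * qfact q k) else 0

/-- q-shifted factorial (x;q)_n. -/
noncomputable def qpoch (x q : ℂ) (n : ℕ) : ℂ := ∏ i ∈ Finset.range n, (1 - q ^ i * x)

/-- Partial sum defining incomplete q-Chebyshev polynomials of the second kind:
`Usum x s q n (k+1)` is U_n^k(x,s,q), and `Usum x s q n 0 = 0` is the empty sum (k = -1). -/
noncomputable def Usum (x s q : ℂ) (n m : ℕ) : ℂ :=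
  ∑ j ∈ Finset.range m,
    q ^ (j ^ 2) * qbinom q (n - j) j * (qpoch (-q) q (n - j) / qpoch (-q) q j) *
      s ^ j * x ^ (n - 2 * j)

/-- Partial sum defining incomplete q-Chebyshev polynomials of the first kind:
`Tsum x s q n (k+1)` is T_n^k(x,s,q). -/
noncomputable def Tsum (x s q : ℂ) (n m : ℕ) : ℂ :=
  ∑ j ∈ Finset.range m,
    q ^ (j ^ 2) * (qint q n / qint q (n - j)) * qbinom q (n - j) j *
      (qpoch (-q) q (n - j - 1) / qpoch (-q) q j) * s ^ j * x ^ (n - 2 * j)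

lemma pow_ne_one' (q : ℂ) (hq1 : ‖q‖ < 1) (e : ℕ) (he : 1 ≤ e) : q ^ e ≠ 1 := by
  intro h
  have : ‖q ^ e‖ < 1 := by
    rw [norm_pow]; exact pow_lt_one₀ (norm_nonneg q) hq1 (by omega)
  rw [h] at this; simp at this

lemma one_sub_pow_ne (q : ℂ) (hq1 : ‖q‖ < 1) (e : ℕ) (he : 1 ≤ e) :
    1 - q ^ e ≠ 0 :=
  sub_ne_zero_of_ne (Ne.symm (pow_ne_one' q hq1 e he))

lemma one_sub_ne (q : ℂ) (hq1 : ‖q‖ < 1) : (1 : ℂ) - q ≠ 0 := by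
  have := one_sub_pow_ne q hq1 1 le_rfl; simpa using this

lemma one_add_pow_ne (q : ℂ) (hq1 : ‖q‖ < 1) (e : ℕ) (he : 1 ≤ e) :
    1 + q ^ e ≠ 0 := by
  intro h
  have h2 : q ^ e = -1 := by linear_combination h
  have : ‖q ^ e‖ < 1 := by
    rw [norm_pow]; exact pow_lt_one₀ (norm_nonneg q) hq1 (by omega)
  rw [h2] at this; simp at this

lemma qint_ne (q : ℂ) (hq1 : ‖q‖ < 1) (e : ℕ) (he : 1 ≤ e) : qint q e ≠ 0 :=
  div_ne_zero (one_sub_pow_ne q hq1 e he) (one_sub_ne q hq1)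

lemma qfact_ne (q : ℂ) (hq1 : ‖q‖ < 1) (n : ℕ) : qfact q n ≠ 0 := by
  unfold qfact
  exact Finset.prod_ne_zero_iff.mpr fun i _ => qint_ne q hq1 (i + 1) (by omega)

lemma qpoch_negq_succ (q : ℂ) (n : ℕ) :
    qpoch (-q) q (n + 1) = qpoch (-q) q n * (1 + q ^ (n + 1)) := by
  unfold qpoch; rw [Finset.prod_range_succ]; ring

lemma qpoch_negq_ne (q : ℂ) (hq1 : ‖q‖ < 1) (n : ℕ) : qpoch (-q) q n ≠ 0 := by
  unfold qpoch
  refine Finset.prod_ne_zero_iff.mpr fun i _ => ?_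
  have := one_add_pow_ne q hq1 (i + 1) (by omega)
  intro h; apply this; rw [← h]; ring

lemma qfact_succ (q : ℂ) (n : ℕ) : qfact q (n + 1) = qfact q n * qint q (n + 1) := by
  unfold qfact; rw [Finset.prod_range_succ]

/-- The core q-identity. -/
lemma scalar_id (q : ℂ) (hq1 : ‖q‖ < 1) (m j : ℕ) :
    q ^ (2 * j + 1) * qint q (m + 2 * j + 4) * (1 + q ^ (m + j + 2)) * qint q (m + j + 2) =
      q ^ (2 * j + 1) * (1 + q ^ (m + 2 * j + 3)) * qint q (m + 2 * j + 3) * qint q (m + 2) +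
        q ^ (m + 2 * j + 3) * qint q (m + 2 * j + 2) * qint q (j + 1) * (1 + q ^ (j + 1)) := by
  have h1q := one_sub_ne q hq1
  simp only [qint]
  field_simp
  ring

noncomputable def Dden (q : ℂ) (m j : ℕ) : ℂ :=
  qint q (m + j + 3) * qint q (m + j + 2) * qint q (m + 2) * qint q (j + 1) *
    (1 + q ^ (j + 1)) * qfact q (m + 1) * qfact q j * qpoch (-q) q j

noncomputable def CF (q s x : ℂ) (m j : ℕ) : ℂ :=
  q ^ (j ^ 2) * s ^ (j + 1) * x ^ (m + 2) * qfact q (m + j + 2) * qpoch (-q) q (m + j + 1)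

lemma termL (q : ℂ) (hq1 : ‖q‖ < 1) (s x : ℂ) (m j : ℕ) :
    q ^ ((j + 1) ^ 2) * (qint q (m + 2 * j + 4) / qint q (m + j + 3)) *
        qbinom q (m + j + 3) (j + 1) *
        (qpoch (-q) q (m + j + 2) / qpoch (-q) q (j + 1)) * s ^ (j + 1) * x ^ (m + 2) =
      CF q s x m j * (q ^ (2 * j + 1) * qint q (m + 2 * j + 4) * (1 + q ^ (m + j + 2)) *
        qint q (m + j + 3) * qint q (m + j + 2)) / Dden q m j := by
  have hI1 := qint_ne q hq1 (m + j + 3) (by omega)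
  have hI2 := qint_ne q hq1 (m + j + 2) (by omega)
  have hI3 := qint_ne q hq1 (m + 2) (by omega)
  have hI4 := qint_ne q hq1 (j + 1) (by omega)
  have ha1 := one_add_pow_ne q hq1 (j + 1) (by omega)
  have hF1 := qfact_ne q hq1 (m + 1)
  have hF2 := qfact_ne q hq1 j
  have hP := qpoch_negq_ne q hq1 j
  have eF3 : qfact q (m + j + 3) = qfact q (m + j + 2) * qint q (m + j + 3) :=
    qfact_succ q (m + j + 2)
  have eF : qfact q (m + 2) = qfact q (m + 1) * qint q (m + 2) := qfact_succ q (m + 1)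
  have eFj : qfact q (j + 1) = qfact q j * qint q (j + 1) := qfact_succ q j
  have eP : qpoch (-q) q (m + j + 2) = qpoch (-q) q (m + j + 1) * (1 + q ^ (m + j + 2)) :=
    qpoch_negq_succ q (m + j + 1)
  have ePj : qpoch (-q) q (j + 1) = qpoch (-q) q j * (1 + q ^ (j + 1)) := qpoch_negq_succ q j
  rw [qbinom, if_pos (by omega), show m + j + 3 - (j + 1) = m + 2 from by omega,
    eF3, eF, eFj, eP, ePj, CF, Dden]
  rw [show (j + 1) ^ 2 = j ^ 2 + (2 * j + 1) from by ring, pow_add]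
  generalize hA : (1 : ℂ) + q ^ (j + 1) = A at ha1 ⊢
  simp only [div_mul_div_comm, div_mul_eq_mul_div, mul_div_assoc', div_div]
  rw [div_eq_div_iff (by apply_rules [mul_ne_zero]) (by apply_rules [mul_ne_zero])]
  ring

lemma termB (q : ℂ) (hq1 : ‖q‖ < 1) (s x : ℂ) (m j : ℕ) :
    (1 + q ^ (m + 2 * j + 3)) * x *
        (q ^ ((j + 1) ^ 2) * (qint q (m + 2 * j + 3) / qint q (m + j + 2)) *
          qbinom q (m + j + 2) (j + 1) *
          (qpoch (-q) q (m + j + 1) / qpoch (-q) q (j + 1)) * s ^ (j + 1) * x ^ (m + 1)) =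
      CF q s x m j * (q ^ (2 * j + 1) * (1 + q ^ (m + 2 * j + 3)) * qint q (m + 2 * j + 3) *
        qint q (m + j + 3) * qint q (m + 2)) / Dden q m j := by
  have hI1 := qint_ne q hq1 (m + j + 3) (by omega)
  have hI2 := qint_ne q hq1 (m + j + 2) (by omega)
  have hI3 := qint_ne q hq1 (m + 2) (by omega)
  have hI4 := qint_ne q hq1 (j + 1) (by omega)
  have ha1 := one_add_pow_ne q hq1 (j + 1) (by omega)
  have hF1 := qfact_ne q hq1 (m + 1)
  have hF2 := qfact_ne q hq1 j
  have hP := qpoch_negq_ne q hq1 j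
  have eF2 : qfact q (m + j + 2) = qfact q (m + j + 1) * qint q (m + j + 2) :=
    qfact_succ q (m + j + 1)
  have eFj : qfact q (j + 1) = qfact q j * qint q (j + 1) := qfact_succ q j
  have ePj : qpoch (-q) q (j + 1) = qpoch (-q) q j * (1 + q ^ (j + 1)) := qpoch_negq_succ q j
  rw [qbinom, if_pos (by omega), show m + j + 2 - (j + 1) = m + 1 from by omega,
    eFj, ePj, CF, Dden, eF2]
  rw [show (j + 1) ^ 2 = j ^ 2 + (2 * j + 1) from by ring, pow_add]
  rw [show (m + 2 : ℕ) = (m + 1) + 1 from rfl, pow_succ x (m + 1)]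
  generalize hA : (1 : ℂ) + q ^ (j + 1) = A at ha1 ⊢
  simp only [div_mul_div_comm, div_mul_eq_mul_div, mul_div_assoc', div_div]
  rw [div_eq_div_iff (by apply_rules [mul_ne_zero]) (by apply_rules [mul_ne_zero])]
  ring

lemma termC (q : ℂ) (hq1 : ‖q‖ < 1) (s x : ℂ) (m j : ℕ) :
    q ^ (m + 2 * j + 3) * s *
        (q ^ (j ^ 2) * (qint q (m + 2 * j + 2) / qint q (m + j + 2)) * qbinom q (m + j + 2) j *
          (qpoch (-q) q (m + j + 1) / qpoch (-q) q j) * s ^ j * x ^ (m + 2)) =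
      CF q s x m j * (q ^ (m + 2 * j + 3) * qint q (m + 2 * j + 2) * qint q (m + j + 3) *
        qint q (j + 1) * (1 + q ^ (j + 1))) / Dden q m j := by
  have hI1 := qint_ne q hq1 (m + j + 3) (by omega)
  have hI2 := qint_ne q hq1 (m + j + 2) (by omega)
  have hI3 := qint_ne q hq1 (m + 2) (by omega)
  have hI4 := qint_ne q hq1 (j + 1) (by omega)
  have ha1 := one_add_pow_ne q hq1 (j + 1) (by omega)
  have hF1 := qfact_ne q hq1 (m + 1)
  have hF2 := qfact_ne q hq1 j
  have hP := qpoch_negq_ne q hq1 j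
  have eF : qfact q (m + 2) = qfact q (m + 1) * qint q (m + 2) := qfact_succ q (m + 1)
  rw [qbinom, if_pos (by omega), show m + j + 2 - j = m + 2 from by omega, eF, CF, Dden]
  rw [pow_succ s j]
  generalize hA : (1 : ℂ) + q ^ (j + 1) = A at ha1 ⊢
  simp only [div_mul_div_comm, div_mul_eq_mul_div, mul_div_assoc', div_div]
  rw [div_eq_div_iff (by apply_rules [mul_ne_zero]) (by apply_rules [mul_ne_zero])]
  ring

lemma term_rec (q : ℂ) (hq1 : ‖q‖ < 1) (s x : ℂ) (m j : ℕ) :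
    q ^ ((j + 1) ^ 2) * (qint q (m + 2 * j + 4) / qint q (m + j + 3)) *
        qbinom q (m + j + 3) (j + 1) *
        (qpoch (-q) q (m + j + 2) / qpoch (-q) q (j + 1)) * s ^ (j + 1) * x ^ (m + 2) =
      (1 + q ^ (m + 2 * j + 3)) * x *
          (q ^ ((j + 1) ^ 2) * (qint q (m + 2 * j + 3) / qint q (m + j + 2)) *
            qbinom q (m + j + 2) (j + 1) *
            (qpoch (-q) q (m + j + 1) / qpoch (-q) q (j + 1)) * s ^ (j + 1) * x ^ (m + 1)) +
        q ^ (m + 2 * j + 3) * s *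
          (q ^ (j ^ 2) * (qint q (m + 2 * j + 2) / qint q (m + j + 2)) * qbinom q (m + j + 2) j *
            (qpoch (-q) q (m + j + 1) / qpoch (-q) q j) * s ^ j * x ^ (m + 2)) := by
  rw [termL q hq1 s x m j, termB q hq1 s x m j, termC q hq1 s x m j, ← add_div]
  congr 1
  linear_combination (CF q s x m j * qint q (m + j + 3)) * scalar_id q hq1 m j

theorem Tinc_nonhom_rec (q : ℂ) (hq0 : 0 < ‖q‖) (hq1 : ‖q‖ < 1)
    (x s : ℂ) (n k : ℕ) (hk : 2 * k ≤ n) :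
    Tsum x s q (n + 2) (k + 1) =
      (1 + q ^ (n + 1)) * x * Tsum x s q (n + 1) (k + 1) +
        q ^ (n + 1) * s * Tsum x s q n (k + 1) -
        q ^ (n + 1 + k ^ 2) * (qint q n / qint q (n - k)) * qbinom q (n - k) k *
          (qpoch (-q) q (n - k - 1) / qpoch (-q) q k) * s ^ (k + 1) * x ^ (n - 2 * k) := by
  have hcorr :
      q ^ (n + 1 + k ^ 2) * (qint q n / qint q (n - k)) * qbinom q (n - k) k *
          (qpoch (-q) q (n - k - 1) / qpoch (-q) q k) * s ^ (k + 1) * x ^ (n - 2 * k) =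
        q ^ (n + 1) * s *
          (q ^ (k ^ 2) * (qint q n / qint q (n - k)) * qbinom q (n - k) k *
            (qpoch (-q) q (n - k - 1) / qpoch (-q) q k) * s ^ k * x ^ (n - 2 * k)) := by
    rw [pow_add, pow_succ]
    ring
  have hzero :
      q ^ (0 ^ 2) * (qint q (n + 2) / qint q (n + 2 - 0)) * qbinom q (n + 2 - 0) 0 *
          (qpoch (-q) q (n + 2 - 0 - 1) / qpoch (-q) q 0) * s ^ 0 * x ^ (n + 2 - 2 * 0) =
        (1 + q ^ (n + 1)) * x *
          (q ^ (0 ^ 2) * (qint q (n + 1) / qint q (n + 1 - 0)) * qbinom q (n + 1 - 0) 0 *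
            (qpoch (-q) q (n + 1 - 0 - 1) / qpoch (-q) q 0) * s ^ 0 * x ^ (n + 1 - 2 * 0)) := by
    have h2 := qint_ne q hq1 (n + 2) (by omega)
    have h1 := qint_ne q hq1 (n + 1) (by omega)
    have hF2 := qfact_ne q hq1 (n + 2)
    have hF1 := qfact_ne q hq1 (n + 1)
    simp only [Nat.sub_zero, pow_zero, Nat.mul_zero, qbinom, if_pos (Nat.zero_le _)]
    rw [show (n + 2 - 1 : ℕ) = n + 1 from by omega, show (n + 1 - 1 : ℕ) = n from by omega,
      show qfact q 0 = 1 from rfl, show qpoch (-q) q 0 = 1 from rfl,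
      div_self h2, div_self h1]
    simp only [mul_one]
    rw [div_self hF2, div_self hF1, qpoch_negq_succ q n,
      show (n + 2 : ℕ) = (n + 1) + 1 from rfl, pow_succ x (n + 1)]
    ring
  simp only [Tsum]
  rw [Finset.sum_range_succ']
  rw [Finset.sum_range_succ']
  rw [Finset.sum_range_succ]
  rw [hcorr, hzero]
  have hsum : (∑ j ∈ Finset.range k,
      q ^ ((j + 1) ^ 2) * (qint q (n + 2) / qint q (n + 2 - (j + 1))) *
        qbinom q (n + 2 - (j + 1)) (j + 1) *
        (qpoch (-q) q (n + 2 - (j + 1) - 1) / qpoch (-q) q (j + 1)) * s ^ (j + 1) *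
        x ^ (n + 2 - 2 * (j + 1))) =
      ∑ j ∈ Finset.range k,
        ((1 + q ^ (n + 1)) * x *
          (q ^ ((j + 1) ^ 2) * (qint q (n + 1) / qint q (n + 1 - (j + 1))) *
            qbinom q (n + 1 - (j + 1)) (j + 1) *
            (qpoch (-q) q (n + 1 - (j + 1) - 1) / qpoch (-q) q (j + 1)) * s ^ (j + 1) *
            x ^ (n + 1 - 2 * (j + 1))) +
         q ^ (n + 1) * s *
          (q ^ (j ^ 2) * (qint q n / qint q (n - j)) * qbinom q (n - j) j *
            (qpoch (-q) q (n - j - 1) / qpoch (-q) q j) * s ^ j * x ^ (n - 2 * j))) := by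
    refine Finset.sum_congr rfl fun j hj => ?_
    have hjk : j < k := Finset.mem_range.mp hj
    obtain ⟨m, rfl⟩ : ∃ m, n = m + 2 * j + 2 := ⟨n - (2 * j + 2), by omega⟩
    simp only [show m + 2 * j + 2 + 2 = m + 2 * j + 4 from by omega,
      show m + 2 * j + 2 + 1 = m + 2 * j + 3 from by omega,
      show m + 2 * j + 4 - (j + 1) = m + j + 3 from by omega,
      show m + j + 3 - 1 = m + j + 2 from by omega,
      show m + 2 * j + 4 - 2 * (j + 1) = m + 2 from by omega,
      show m + 2 * j + 3 - (j + 1) = m + j + 2 from by omega,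
      show m + j + 2 - 1 = m + j + 1 from by omega,
      show m + 2 * j + 3 - 2 * (j + 1) = m + 1 from by omega,
      show m + 2 * j + 2 - j = m + j + 2 from by omega,
      show m + 2 * j + 2 - 2 * j = m + 2 from by omega]
    exact term_rec q hq1 s x m j
  rw [hsum, Finset.sum_add_distrib, ← Finset.mul_sum, ← Finset.mul_sum]
  ring
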